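/- Let x, x', q be vectors in the simplex Δ_m and let A be an m×m real matrix with all payoff values (x'')ᵀ A y'' in [0,1] for all x'', y'' ∈ Δ_m. If q maximizes qᵀ A x over Δ_m (i.e., q is a best response to x), and x̄ = (x + q)/2, then qᵀ A x̄ − xᵀ A x̄ + xᵀ A x − x̄ᵀ A x ≤ 1/2. More generally, in a polymatrix game with normalized payoffs, setting x' = (x̄ + x*)/2 where x̄ is a profile of best responses to x*, every player i with maximum regret satisfies Df_i^δ(x*, x') ≤ 1/2. -/

import Mathlib

open Finset
open scoped Classical

noncomputable section

/-- maximum of `v` over a finset `S` (junk value `0` if `S` is empty). -/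
noncomputable def fsMaxOn {α : Type*} (S : Finset α) (v : α → ℝ) : ℝ :=
  if h : S.Nonempty then S.sup' h v else 0

/-- minimum of `v` over a finset `S` (junk value `0` if `S` is empty). -/
noncomputable def fsMinOn {α : Type*} (S : Finset α) (v : α → ℝ) : ℝ :=
  if h : S.Nonempty then S.inf' h v else 0

section Polymatrix

variable {n : ℕ} (m : Fin n → ℕ) (N : Fin n → Finset (Fin n))
  (A : ∀ i j : Fin n, Matrix (Fin (m i)) (Fin (m j)) ℝ)

/-- vector of pure-strategy payoffs of player `i` against profile `x`:
`u_i^s(x) = Σ_{j ∈ N(i)} A_ij x_j`. -/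
def usVec (i : Fin n) (x : ∀ j, Fin (m j) → ℝ) : Fin (m i) → ℝ :=
  fun k => ∑ j ∈ N i, ∑ q, A i j k q * x j q

/-- payoff to player `i` from playing the (possibly formal) strategy `y`
against profile `x`: `u_i(y, x) = yᵀ u_i^s(x)`. -/
def payTo (i : Fin n) (y : Fin (m i) → ℝ) (x : ∀ j, Fin (m j) → ℝ) : ℝ :=
  ∑ k, y k * usVec m N A i x k

/-- payoff of player `i` under profile `x`. -/
def payoff (i : Fin n) (x : ∀ j, Fin (m j) → ℝ) : ℝ := payTo m N A i (x i) x

/-- best-response payoff of player `i` against `x`. -/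
def brp (i : Fin n) (x : ∀ j, Fin (m j) → ℝ) : ℝ := fsMaxOn univ (usVec m N A i x)

/-- pure best responses of player `i` against `x`. -/
def brSet (i : Fin n) (x : ∀ j, Fin (m j) → ℝ) : Finset (Fin (m i)) :=
  univ.filter fun k => ∀ l, usVec m N A i x l ≤ usVec m N A i x k

/-- `δ`-best responses of player `i` against `x`. -/
def brdSet (δ : ℝ) (i : Fin n) (x : ∀ j, Fin (m j) → ℝ) : Finset (Fin (m i)) :=
  univ.filter fun k => brp m N A i x - δ ≤ usVec m N A i x k

/-- regret of player `i` under `x`: `f_i(x)`. -/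
def regret (i : Fin n) (x : ∀ j, Fin (m j) → ℝ) : ℝ :=
  brp m N A i x - payoff m N A i x

/-- maximum regret `f(x) = max_i f_i(x)`. -/
def maxRegret (x : ∀ j, Fin (m j) → ℝ) : ℝ := fsMaxOn univ fun i => regret m N A i x

/-- set of players with maximum regret `K(x)`. -/
def Kset (x : ∀ j, Fin (m j) → ℝ) : Finset (Fin n) :=
  univ.filter fun i => regret m N A i x = maxRegret m N A x

/-- `Df_i^δ(x, x')`. -/
def Dfd (δ : ℝ) (i : Fin n) (x x' : ∀ j, Fin (m j) → ℝ) : ℝ :=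
  fsMaxOn (brdSet m N A δ i x) (usVec m N A i x')
    - payTo m N A i (x i) x' - payTo m N A i (x' i) x + payTo m N A i (x i) x

/-- `Df^δ(x, x') = max_{i ∈ K(x)} Df_i^δ(x, x') - f(x)`. -/
def DfdAll (δ : ℝ) (x x' : ∀ j, Fin (m j) → ℝ) : ℝ :=
  fsMaxOn (Kset m N A x) (fun i => Dfd m N A δ i x x') - maxRegret m N A x

/-- `Df_i(x, x')` (with exact best responses). -/
def Dfbr (i : Fin n) (x x' : ∀ j, Fin (m j) → ℝ) : ℝ :=
  fsMaxOn (brSet m N A i x) (usVec m N A i x')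
    - payTo m N A i (x i) x' - payTo m N A i (x' i) x + payTo m N A i (x i) x

/-- the profile `(1-ε)x + εx'`. -/
def mix (x x' : ∀ j, Fin (m j) → ℝ) (ε : ℝ) : ∀ j, Fin (m j) → ℝ :=
  fun j => (1 - ε) • x j + ε • x' j

/-- `Λ_i^δ(x, x', ε)`; if the complement of the `δ`-best-response set is empty
the inner maximum is `-∞`, i.e. `Λ_i^δ = 0`. -/
def Lamd (δ : ℝ) (i : Fin n) (x x' : ∀ j, Fin (m j) → ℝ) (ε : ℝ) : ℝ :=
  if _h : ((brdSet m N A δ i x)ᶜ).Nonempty then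
    max 0 (fsMaxOn (brdSet m N A δ i x)ᶜ (usVec m N A i (mix m x x' ε))
         - fsMaxOn (brdSet m N A δ i x) (usVec m N A i (mix m x x' ε)))
  else 0

/-- `Λ_i(x, x', ε)` (with exact best responses). -/
def LamBr (i : Fin n) (x x' : ∀ j, Fin (m j) → ℝ) (ε : ℝ) : ℝ :=
  if _h : ((brSet m N A i x)ᶜ).Nonempty then
    max 0 (fsMaxOn (brSet m N A i x)ᶜ (usVec m N A i (mix m x x' ε))
         - fsMaxOn (brSet m N A i x) (usVec m N A i (mix m x x' ε)))
  else 0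

/-- `x` is a mixed strategy profile. -/
def isProfile (x : ∀ j, Fin (m j) → ℝ) : Prop :=
  ∀ j, x j ∈ stdSimplex ℝ (Fin (m j))

/-- the game is normalized: all pure-strategy payoffs of every player lie in
`[0,1]` against every mixed profile. -/
def normalized : Prop :=
  ∀ i (x : ∀ j, Fin (m j) → ℝ), isProfile m x →
    ∀ k, usVec m N A i x k ∈ Set.Icc (0:ℝ) 1


/-- Lemma `dfi-bound` / Statement 1: with `x'= (x̄ + x*)/2`, where `x̄` is a
profile of best responses to `x*`, every maximum-regret player `i` has
`Df_i^δ(x*, x') ≤ 1/2`. -/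
theorem stmt1 (hn : 0 < n) (hm : ∀ i, 0 < m i) (hnorm : normalized m N A)
    (δ : ℝ) (hδ : 0 < δ) (hδ' : δ ≤ 0.5)
    (xstar xbar : ∀ j, Fin (m j) → ℝ)
    (hx : isProfile m xstar) (hb : isProfile m xbar)
    (hbr : ∀ i, payTo m N A i (xbar i) xstar = brp m N A i xstar)
    (i : Fin n) (hi : i ∈ Kset m N A xstar) :
    Dfd m N A δ i xstar (fun j => (2⁻¹ : ℝ) • (xbar j + xstar j)) ≤ 1 / 2 := by
  classical
  have hne : (Finset.univ : Finset (Fin (m i))).Nonempty := by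
    have := hm i
    exact ⟨⟨0, this⟩, Finset.mem_univ _⟩
  have hbrp : brp m N A i xstar = Finset.univ.sup' hne (usVec m N A i xstar) := by
    simp [brp, fsMaxOn, hne]
  -- the δ-best-response set is nonempty
  obtain ⟨k0, -, hk0⟩ := Finset.exists_mem_eq_sup' hne (usVec m N A i xstar)
  have hBne : (brdSet m N A δ i xstar).Nonempty := by
    refine ⟨k0, ?_⟩
    simp only [brdSet, Finset.mem_filter, Finset.mem_univ, true_and]
    rw [hbrp, hk0]; linarith
  -- linearity of usVec
  have husVec : ∀ k, usVec m N A i (fun j => (2⁻¹ : ℝ) • (xbar j + xstar j)) k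
      = 2⁻¹ * (usVec m N A i xbar k + usVec m N A i xstar k) := by
    intro k
    simp only [usVec, Pi.smul_apply, Pi.add_apply, smul_eq_mul, mul_add,
      Finset.mul_sum, ← Finset.sum_add_distrib]
    exact Finset.sum_congr rfl fun j _ => Finset.sum_congr rfl fun q _ => by ring
  -- linearity of payTo in the second argument
  have hpay2 : ∀ y : Fin (m i) → ℝ,
      payTo m N A i y (fun j => (2⁻¹ : ℝ) • (xbar j + xstar j))
        = 2⁻¹ * (payTo m N A i y xbar + payTo m N A i y xstar) := by
    intro y
    simp only [payTo, husVec, mul_add, Finset.mul_sum, ← Finset.sum_add_distrib]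
    exact Finset.sum_congr rfl fun k _ => by ring
  -- linearity of payTo in the first argument
  have hpay1 : payTo m N A i ((2⁻¹ : ℝ) • (xbar i + xstar i)) xstar
      = 2⁻¹ * (payTo m N A i (xbar i) xstar + payTo m N A i (xstar i) xstar) := by
    simp only [payTo, Pi.smul_apply, Pi.add_apply, smul_eq_mul, mul_add,
      Finset.mul_sum, ← Finset.sum_add_distrib]
    exact Finset.sum_congr rfl fun k _ => by ring
  -- bounds
  have hbarle : ∀ k, usVec m N A i xbar k ≤ 1 := fun k => (hnorm i xbar hb k).2
  have hbarge : ∀ k, 0 ≤ usVec m N A i xbar k := fun k => (hnorm i xbar hb k).1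
  have hstarle : ∀ k, usVec m N A i xstar k ≤ brp m N A i xstar := by
    intro k
    rw [hbrp]
    exact Finset.le_sup' _ (Finset.mem_univ k)
  -- bound on the max term
  have hmax : fsMaxOn (brdSet m N A δ i xstar)
      (usVec m N A i (fun j => (2⁻¹ : ℝ) • (xbar j + xstar j)))
      ≤ 2⁻¹ * (1 + brp m N A i xstar) := by
    rw [fsMaxOn, dif_pos hBne]
    apply Finset.sup'_le
    intro k _
    rw [husVec k]
    have h1 := hbarle k
    have h2 := hstarle k
    nlinarith
  -- nonnegativity of payTo (xstar i) xbar
  have hnn : 0 ≤ payTo m N A i (xstar i) xbar := by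
    apply Finset.sum_nonneg
    intro k _
    exact mul_nonneg ((hx i).1 k) (hbarge k)
  have hbri := hbr i
  rw [Dfd, hpay2 (xstar i), hpay1, hbri]
  linarith [hmax]


end Polymatrix
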